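/- For n ≥ 2, the identity matrix on ℂ^{n²} cannot be written as ∑_k r_k · vec(ρ_k) vec(ρ_k)ᴴ where each r_k > 0 and each ρ_k ∈ M_n(ℂ) is positive semidefinite and nonzero. Precisely: there is no finite family (r_k, ρ_k) with r_k > 0, ρ_k PosSemidef, ρ_k ≠ 0, such that for all a,b,c,d ∈ Fin n: (if (a,b) = (c,d) then 1 else 0) = ∑_k r_k * (ρ_k a b) * conj (ρ_k c d). -/

import Mathlib

open scoped ComplexOrder
open Matrix

lemma psd_row_col_zero {n : ℕ} {A : Matrix (Fin n) (Fin n) ℂ} (hA : A.PosSemidef)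
    {i : Fin n} (h : A i i = 0) (j : Fin n) : A i j = 0 ∧ A j i = 0 := by
  have hx : star (Pi.single i 1 : Fin n → ℂ) ⬝ᵥ A *ᵥ Pi.single i 1 = 0 := by
    simp [dotProduct, Matrix.mulVec_single, Pi.single_apply, h]
  have hcol := (hA.dotProduct_mulVec_zero_iff _).mp hx
  have hji : A j i = 0 := by
    have := congrFun hcol j
    simpa [Matrix.mulVec_single] using this
  have hij : A i j = 0 := by
    have := hA.isHermitian
    have h2 : A i j = star (A j i) := by
      rw [← Matrix.conjTranspose_apply, hA.isHermitian.eq]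
    simp [h2, hji]
  exact ⟨hij, hji⟩

lemma psd_diag_nonneg {n : ℕ} {A : Matrix (Fin n) (Fin n) ℂ} (hA : A.PosSemidef)
    (i : Fin n) : 0 ≤ A i i := by
  have := hA.dotProduct_mulVec_nonneg (Pi.single i 1)
  simpa [dotProduct, Matrix.mulVec_single, Pi.single_apply] using this

theorem identity_not_sum_vec_outer (n : ℕ) (hn : 2 ≤ n) :
    ¬ ∃ (N : ℕ) (r : Fin N → ℝ) (ρ : Fin N → Matrix (Fin n) (Fin n) ℂ),
      (∀ k, 0 < r k) ∧ (∀ k, (ρ k).PosSemidef) ∧ (∀ k, ρ k ≠ 0) ∧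
      ∀ a b c d : Fin n,
        (if (a, b) = (c, d) then (1 : ℂ) else 0) =
          ∑ k, (r k : ℂ) * ρ k a b * (starRingEnd ℂ) (ρ k c d) := by
  rintro ⟨N, r, ρ, hr, hpsd, -, heq⟩
  set i0 : Fin n := ⟨0, by omega⟩
  set i1 : Fin n := ⟨1, by omega⟩
  have hne : i0 ≠ i1 := by simp [i0, i1, Fin.ext_iff]
  -- each k: ρ k i0 i0 * ρ k i1 i1 = 0
  have h0 := heq i0 i0 i1 i1
  rw [if_neg (by simp [Prod.ext_iff, hne])] at h0
  have hterm : ∀ k, (0:ℂ) ≤ (r k : ℂ) * ρ k i0 i0 * (starRingEnd ℂ) (ρ k i1 i1) := by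
    intro k
    have h00 := psd_diag_nonneg (hpsd k) i0
    have h11 := psd_diag_nonneg (hpsd k) i1
    have : (starRingEnd ℂ) (ρ k i1 i1) = ρ k i1 i1 := by
      rw [Complex.conj_eq_iff_im]
      exact (Complex.nonneg_iff.mp h11).2.symm
    rw [this]
    have hrk : (0:ℂ) ≤ (r k : ℂ) := by
      exact_mod_cast (hr k).le
    exact mul_nonneg (mul_nonneg hrk h00) h11
  have hzero : ∀ k ∈ Finset.univ, (r k : ℂ) * ρ k i0 i0 * (starRingEnd ℂ) (ρ k i1 i1) = 0 := by
    rw [← Finset.sum_eq_zero_iff_of_nonneg (fun k _ => hterm k)]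
    exact h0.symm
  have hoff : ∀ k, ρ k i0 i1 = 0 := by
    intro k
    have := hzero k (Finset.mem_univ k)
    have hrk : (r k : ℂ) ≠ 0 := by exact_mod_cast (hr k).ne'
    rcases mul_eq_zero.mp this with h | h
    · rcases mul_eq_zero.mp h with h | h
      · exact absurd h hrk
      · exact (psd_row_col_zero (hpsd k) h i1).1
    · have : ρ k i1 i1 = 0 := by
        simpa using congrArg (starRingEnd ℂ) h
      exact (psd_row_col_zero (hpsd k) this i0).2
  have h1 := heq i0 i1 i0 i1
  rw [if_pos rfl] at h1
  simp [hoff] at h1
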